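/- For all x, y ∈ (0,1), the Beta function satisfies B(x,y) > ((x+y)/(xy))·(1 - 2xy/(x+y+1)). -/

import Mathlib

open Real MeasureTheory intervalIntegral

lemma bern2 (x : ℝ) (hx0 : 0 < x) (hx1 : x < 1) {t : ℝ} (ht0 : 0 < t) (ht1 : t ≤ 1) :
    1 + x*(1-x)*(1-t)^2/2 ≤ t^x + x*(1-t)*t^(x-1) := by
  set φ : ℝ → ℝ := fun u => u^x + x*(1-u)*u^(x-1) - x*(1-x)*(1-u)^2/2 with hφ
  have hder : ∀ u ∈ Set.Icc t 1, HasDerivAt φ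
      (x*(x-1)*(1-u)*u^(x-2) + x*(1-x)*(1-u)) u := by
    intro u hu
    have hu0 : 0 < u := lt_of_lt_of_le ht0 hu.1
    have h1 : HasDerivAt (fun u : ℝ => u^x) (x * u^(x-1)) u :=
      Real.hasDerivAt_rpow_const (Or.inl hu0.ne')
    have h2 : HasDerivAt (fun u : ℝ => u^(x-1)) ((x-1) * u^(x-1-1)) u :=
      Real.hasDerivAt_rpow_const (Or.inl hu0.ne')
    have h3 : HasDerivAt (fun u : ℝ => x*(1-u)) (-x) u := by
      simpa using ((hasDerivAt_id u).const_sub 1).const_mul x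
    have h4 := h3.mul h2
    have h5 : HasDerivAt (fun u : ℝ => x*(1-x)*(1-u)^2/2) (-(x*(1-x)*(1-u))) u := by
      have h6 : HasDerivAt (fun u : ℝ => (1-u)^2) (2*(1-u)*(-1)) u := by
        simpa using (((hasDerivAt_id u).const_sub 1).fun_pow 2)
      have := (h6.const_mul (x*(1-x))).div_const 2
      exact this.congr_deriv (by ring)
    have h7 := (h1.add h4).sub h5
    have hrw : u^(x-1-1) = u^(x-2) := by congr 1; ring
    exact h7.congr_deriv (by rw [hrw]; ring)
  have hanti : AntitoneOn φ (Set.Icc t 1) := by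
    apply antitoneOn_of_deriv_nonpos (convex_Icc t 1)
    · exact fun u hu => (hder u hu).continuousAt.continuousWithinAt
    · intro u hu
      rw [interior_Icc] at hu
      exact ((hder u ⟨hu.1.le, hu.2.le⟩).differentiableAt).differentiableWithinAt
    · intro u hu
      rw [interior_Icc] at hu
      rw [(hder u ⟨hu.1.le, hu.2.le⟩).deriv]
      have hu0 : 0 < u := lt_of_lt_of_le ht0 hu.1.le
      have h7 : (1:ℝ) ≤ u^(x-2) :=
        Real.one_le_rpow_of_pos_of_le_one_of_nonpos hu0 hu.2.le (by linarith)
      nlinarith [mul_nonneg (mul_nonneg (mul_pos hx0 (show (0:ℝ) < 1-x by linarith)).le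
        (show (0:ℝ) ≤ 1-u by linarith [hu.2])) (show (0:ℝ) ≤ u^(x-2)-1 by linarith)]
  have h8 := hanti (Set.left_mem_Icc.2 ht1) (Set.right_mem_Icc.2 ht1) ht1
  have h9 : φ 1 = 1 := by simp [hφ]
  rw [h9] at h8
  have h10 : φ t = t^x + x*(1-t)*t^(x-1) - x*(1-x)*(1-t)^2/2 := rfl
  linarith [h10 ▸ h8]

lemma cpow_aux {t u v : ℝ} (ht0 : 0 ≤ t) (ht1 : 0 ≤ 1 - t) :
    (t:ℂ) ^ ((u:ℂ) - 1) * (1 - (t:ℂ)) ^ ((v:ℂ) - 1)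
      = ((t ^ (u-1) * (1-t) ^ (v-1) : ℝ) : ℂ) := by
  have e1 : ((t ^ (u-1) : ℝ) : ℂ) = (t:ℂ) ^ ((u:ℂ) - 1) := by
    rw [Complex.ofReal_cpow ht0]; push_cast; ring_nf
  have e2 : (((1-t) ^ (v-1) : ℝ) : ℂ) = (1 - (t:ℂ)) ^ ((v:ℂ) - 1) := by
    rw [Complex.ofReal_cpow ht1]; push_cast; ring_nf
  rw [Complex.ofReal_mul, e1, e2]

lemma realBetaIntegrable {u v : ℝ} (hu : 0 < u) (hv : 0 < v) :
    IntervalIntegrable (fun t : ℝ => t^(u-1)*(1-t)^(v-1)) volume 0 1 := by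
  have h := Complex.betaIntegral_convergent (u := (u:ℂ)) (v := (v:ℂ))
    (by simpa using hu) (by simpa using hv)
  rw [intervalIntegrable_iff] at h ⊢
  have h2 := h.re
  apply h2.congr
  filter_upwards [ae_restrict_mem measurableSet_uIoc] with t ht
  rw [Set.uIoc_of_le (by norm_num : (0:ℝ) ≤ 1)] at ht
  rw [cpow_aux ht.1.le (by linarith [ht.2] : (0:ℝ) ≤ 1 - t)]
  simp

lemma realBeta {u v : ℝ} (hu : 0 < u) (hv : 0 < v) :
    Real.Gamma u * Real.Gamma v / Real.Gamma (u+v)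
      = ∫ t in (0:ℝ)..1, t^(u-1)*(1-t)^(v-1) := by
  have hc := Complex.Gamma_mul_Gamma_eq_betaIntegral (s := (u:ℂ)) (t := (v:ℂ))
    (by simpa using hu) (by simpa using hv)
  have hBeta : Complex.betaIntegral (u:ℂ) (v:ℂ)
      = ((∫ t in (0:ℝ)..1, t^(u-1)*(1-t)^(v-1) : ℝ) : ℂ) := by
    rw [Complex.betaIntegral, ← intervalIntegral.integral_ofReal]
    apply intervalIntegral.integral_congr
    intro t ht
    rw [Set.uIcc_of_le (by norm_num : (0:ℝ) ≤ 1)] at ht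
    exact cpow_aux ht.1 (by linarith [ht.2])
  rw [hBeta] at hc
  have hG : (0:ℝ) < Real.Gamma (u+v) := Real.Gamma_pos_of_pos (by linarith)
  have hreal : Real.Gamma u * Real.Gamma v
      = Real.Gamma (u+v) * ∫ t in (0:ℝ)..1, t^(u-1)*(1-t)^(v-1) := by
    rw [show ((u:ℂ)+(v:ℂ)) = ((u+v:ℝ):ℂ) by push_cast; ring] at hc
    rw [Complex.Gamma_ofReal, Complex.Gamma_ofReal, Complex.Gamma_ofReal] at hc
    exact_mod_cast hc
  rw [hreal]
  field_simp

lemma pointwise {x y : ℝ} (hx0 : 0 < x) (hx1 : x < 1) (hy0 : 0 < y) (hy1 : y < 1) :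
    ∀ t ∈ Set.Icc (0:ℝ) 1,
      t^(x-1) + (1-t)^(y-1) - 1 + (1-x)*y*(1-y)/2*(t^(x+1)*(1-t))
        + x*(1-x)*(1-y)/2*(t*(1-t)^(y+1)) + x*(1-x)*y*(1-y)/4*(t^2*(1-t)^2)
      ≤ t^(x-1)*(1-t)^(y-1) - (1-x)*(1-y)*(t^x*(1-t)^y) := by
  intro t ht
  rcases eq_or_lt_of_le ht.1 with h0 | ht0
  · rw [← h0]
    rw [Real.zero_rpow (by linarith : x - 1 ≠ 0), Real.zero_rpow (by linarith : x + 1 ≠ 0),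
      Real.zero_rpow hx0.ne']
    norm_num
  rcases eq_or_lt_of_le ht.2 with h1 | ht1
  · rw [h1]
    rw [show (1:ℝ) - 1 = 0 by norm_num, Real.zero_rpow (by linarith : y - 1 ≠ 0),
      Real.zero_rpow (by linarith : y + 1 ≠ 0), Real.zero_rpow hy0.ne']
    norm_num
  · have h1t : 0 < 1 - t := by linarith
    set A := t^(x-1) with hA
    set B := (1-t)^(y-1) with hB
    have e1 : t^x = t*A := by
      rw [hA, show x = (x-1)+1 by ring, Real.rpow_add ht0, Real.rpow_one]; ring
    have e2 : (1-t)^y = (1-t)*B := by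
      rw [hB, show y = (y-1)+1 by ring, Real.rpow_add h1t, Real.rpow_one]; ring
    have e3 : t^(x+1) = t^2*A := by
      rw [hA, show x+1 = (x-1)+2 by ring, Real.rpow_add ht0, Real.rpow_two]; ring
    have e4 : (1-t)^(y+1) = (1-t)^2*B := by
      rw [hB, show y+1 = (y-1)+2 by ring, Real.rpow_add h1t, Real.rpow_two]; ring
    have K1 := bern2 x hx0 hx1 ht0 ht1.le
    have K2 := bern2 y hy0 hy1 h1t (by linarith : 1 - t ≤ 1)
    rw [e1, show x*(1-t)*t^(x-1) = x*(1-t)*A by rw [hA]] at K1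
    rw [show (1:ℝ)-(1-t) = t by ring] at K2
    rw [e2, show y*t*(1-t)^(y-1) = y*t*B by rw [hB]] at K2
    have hA1 : (1-x)*(1-t)*A + x*(1-x)*(1-t)^2/2 ≤ A - 1 := by nlinarith [K1]
    have hB1 : (1-y)*t*B + y*(1-y)*t^2/2 ≤ B - 1 := by nlinarith [K2]
    have hA' : 0 ≤ A := Real.rpow_nonneg ht0.le _
    have hB' : 0 ≤ B := Real.rpow_nonneg h1t.le _
    have hA0 : 0 ≤ (1-x)*(1-t)*A + x*(1-x)*(1-t)^2/2 :=
      add_nonneg (mul_nonneg (mul_nonneg (by linarith) (by linarith)) hA')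
        (by apply div_nonneg _ (by norm_num)
            exact mul_nonneg (mul_nonneg hx0.le (by linarith)) (sq_nonneg _))
    have hB0 : 0 ≤ (1-y)*t*B + y*(1-y)*t^2/2 :=
      add_nonneg (mul_nonneg (mul_nonneg (by linarith) (by linarith)) hB')
        (by apply div_nonneg _ (by norm_num)
            exact mul_nonneg (mul_nonneg hy0.le (by linarith)) (sq_nonneg _))
    have hprod := mul_le_mul hA1 hB1 hB0 (le_trans hA0 hA1)
    rw [e1, e2, e3, e4]
    linarith [hprod]

lemma polyH {x y : ℝ} (hx0 : 0 < x) (hx1 : x < 1) (hy0 : 0 < y) (hy1 : y < 1) :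
    0 < (1-x)*(1-y)*(x+y)*(x+y+1)^2/24 + x*y*(3*(x+y)-1-2*(x*y)) := by
  have hx1' : (0:ℝ) < 1 - x := by linarith
  have hy1' : (0:ℝ) < 1 - y := by linarith
  rcases le_or_gt (1 + 2*(x*y)) (3*(x+y)) with h | h
  · have h1 : 0 ≤ x*y*(3*(x+y)-1-2*(x*y)) := by
      apply mul_nonneg (mul_pos hx0 hy0).le; linarith
    have h2 : 0 < (1-x)*(1-y)*(x+y)*(x+y+1)^2/24 := by
      have := mul_pos (mul_pos (mul_pos hx1' hy1') (add_pos hx0 hy0))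
        (pow_pos (by linarith : (0:ℝ) < x+y+1) 2)
      linarith
    linarith
  · have hs : x + y < 2/5 := by nlinarith [sq_nonneg (x-y)]
    nlinarith [sq_nonneg (x-y), mul_pos hx0 hy0, mul_pos hx1' hy1',
      mul_nonneg (mul_nonneg hx0.le hy0.le) (sq_nonneg (x-y)),
      mul_nonneg (mul_nonneg (mul_nonneg hx0.le hy0.le) (sq_nonneg (x-y))) (add_pos hx0 hy0).le,
      mul_pos (mul_pos hx0 hy0) (mul_pos hx0 hy0),
      mul_nonneg (mul_nonneg (mul_pos hx0 hy0).le (add_pos hx0 hy0).le) (sub_nonneg.2 hs.le)]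

set_option maxHeartbeats 1000000 in
theorem stmt_5 (x y : ℝ) (hx : x ∈ Set.Ioo (0:ℝ) 1) (hy : y ∈ Set.Ioo (0:ℝ) 1) :
    Real.Gamma x * Real.Gamma y / Real.Gamma (x + y) >
      ((x + y) / (x * y)) * (1 - 2 * x * y / (x + y + 1)) := by
  obtain ⟨hx0, hx1⟩ := hx
  obtain ⟨hy0, hy1⟩ := hy
  have hx1' : (0:ℝ) < 1 - x := by linarith
  have hy1' : (0:ℝ) < 1 - y := by linarith
  set c1 : ℝ := (1-x)*y*(1-y)/2 with hc1
  set c2 : ℝ := x*(1-x)*(1-y)/2 with hc2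
  set c3 : ℝ := x*(1-x)*y*(1-y)/4 with hc3
  -- integrability
  have J1 : IntervalIntegrable (fun t : ℝ => t^(x-1)) volume 0 1 :=
    intervalIntegrable_rpow' (by linarith)
  have J2 : IntervalIntegrable (fun t : ℝ => (1-t)^(y-1)) volume 0 1 := by
    have := (intervalIntegrable_rpow' (by linarith : (-1:ℝ) < y-1) (a := 0) (b := 1)).comp_sub_left 1
    norm_num at this
    exact this.symm
  have J3 : IntervalIntegrable (fun t : ℝ => t^(x+1)*(1-t)) volume 0 1 :=
    (intervalIntegrable_rpow' (by linarith)).mul_continuousOn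
      ((continuous_const.sub continuous_id).continuousOn)
  have J4 : IntervalIntegrable (fun t : ℝ => t*(1-t)^(y+1)) volume 0 1 := by
    have h0 : IntervalIntegrable (fun t : ℝ => (1-t)^(y+1)) volume 0 1 := by
      have := (intervalIntegrable_rpow' (by linarith : (-1:ℝ) < y+1) (a := 0) (b := 1)).comp_sub_left 1
      norm_num at this
      exact this.symm
    exact h0.continuousOn_mul continuous_id.continuousOn
  have J5 : IntervalIntegrable (fun t : ℝ => t^2*(1-t)^2) volume 0 1 :=
    (Continuous.mul (continuous_pow 2) ((continuous_const.sub continuous_id).pow 2)).intervalIntegrable 0 1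
  have Jc : IntervalIntegrable (fun _ : ℝ => (1:ℝ)) volume 0 1 := intervalIntegrable_const
  have JB1 : IntervalIntegrable (fun t : ℝ => t^(x-1)*(1-t)^(y-1)) volume 0 1 :=
    realBetaIntegrable hx0 hy0
  have JB2 : IntervalIntegrable (fun t : ℝ => t^x*(1-t)^y) volume 0 1 := by
    have := realBetaIntegrable (by linarith : (0:ℝ) < x+1) (by linarith : (0:ℝ) < y+1)
    simpa using this
  have Jg : IntervalIntegrable (fun t : ℝ => t^(x-1) + (1-t)^(y-1) - 1 + c1*(t^(x+1)*(1-t))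
      + c2*(t*(1-t)^(y+1)) + c3*(t^2*(1-t)^2)) volume 0 1 :=
    ((((J1.add J2).sub Jc).add (J3.const_mul c1)).add (J4.const_mul c2)).add (J5.const_mul c3)
  have Jf : IntervalIntegrable (fun t : ℝ => t^(x-1)*(1-t)^(y-1)
      - (1-x)*(1-y)*(t^x*(1-t)^y)) volume 0 1 :=
    JB1.sub (JB2.const_mul ((1-x)*(1-y)))
  -- monotonicity of integrals
  have hmono := intervalIntegral.integral_mono_on (by norm_num : (0:ℝ) ≤ 1) Jg Jf
    (pointwise hx0 hx1 hy0 hy1)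
  -- value of ∫ g
  have I1 : (∫ t in (0:ℝ)..1, t^(x-1)) = 1/x := by
    rw [integral_rpow (Or.inl (by linarith))]
    rw [Real.one_rpow, Real.zero_rpow (by linarith : x-1+1 ≠ 0)]
    norm_num
  have I1' : ∀ z : ℝ, 0 < z → (∫ t in (0:ℝ)..1, t^(z-1)) = 1/z := by
    intro z hz
    rw [integral_rpow (Or.inl (by linarith))]
    rw [Real.one_rpow, Real.zero_rpow (by linarith : z-1+1 ≠ 0)]
    norm_num
  have I2 : (∫ t in (0:ℝ)..1, (1-t)^(y-1)) = 1/y := by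
    rw [intervalIntegral.integral_comp_sub_left (fun s : ℝ => s^(y-1)) 1,
      show (1:ℝ)-1 = 0 by norm_num, show (1:ℝ)-0 = 1 by norm_num, I1' y hy0]
  have Ipow : ∀ z : ℝ, 0 < z → (∫ t in (0:ℝ)..1, (t^(z+1) - t^(z+2))) = 1/((z+2)*(z+3)) := by
    intro z hz
    rw [integral_sub (intervalIntegrable_rpow' (by linarith)) (intervalIntegrable_rpow' (by linarith)),
      integral_rpow (Or.inl (by linarith)), integral_rpow (Or.inl (by linarith))]
    rw [Real.one_rpow, Real.one_rpow, Real.zero_rpow (by linarith : z+1+1 ≠ 0),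
      Real.zero_rpow (by linarith : z+2+1 ≠ 0)]
    have h2 : z+2 ≠ 0 := by linarith
    have h3 : z+3 ≠ 0 := by linarith
    field_simp
    ring
  have I3 : (∫ t in (0:ℝ)..1, t^(x+1)*(1-t)) = 1/((x+2)*(x+3)) := by
    rw [show (∫ t in (0:ℝ)..1, t^(x+1)*(1-t)) = ∫ t in (0:ℝ)..1, (t^(x+1) - t^(x+2)) from
      intervalIntegral.integral_congr ?_, Ipow x hx0]
    intro t ht
    rw [Set.uIcc_of_le (by norm_num : (0:ℝ) ≤ 1)] at ht
    show t^(x+1)*(1-t) = t^(x+1) - t^(x+2)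
    rcases eq_or_lt_of_le ht.1 with h0 | ht0
    · rw [← h0, Real.zero_rpow (by linarith : x+1 ≠ 0), Real.zero_rpow (by linarith : x+2 ≠ 0)]
      ring
    · have ea : t^(x+1) = t^x*t := by rw [Real.rpow_add ht0, Real.rpow_one]
      have eb : t^(x+2) = t^x*t^2 := by rw [Real.rpow_add ht0, Real.rpow_two]
      rw [ea, eb]; ring
  have I4 : (∫ t in (0:ℝ)..1, t*(1-t)^(y+1)) = 1/((y+2)*(y+3)) := by
    have e : (∫ t in (0:ℝ)..1, t*(1-t)^(y+1)) = ∫ t in (0:ℝ)..1, ((1-t)^(y+1) - (1-t)^(y+2)) := by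
      apply intervalIntegral.integral_congr
      intro t ht
      rw [Set.uIcc_of_le (by norm_num : (0:ℝ) ≤ 1)] at ht
      show t*(1-t)^(y+1) = (1-t)^(y+1) - (1-t)^(y+2)
      rcases eq_or_lt_of_le ht.2 with h1 | ht1
      · rw [h1]
        rw [show (1:ℝ)-1 = 0 by norm_num, Real.zero_rpow (by linarith : y+1 ≠ 0),
          Real.zero_rpow (by linarith : y+2 ≠ 0)]
        ring
      · have h1t : 0 < 1 - t := by linarith
        have ea : (1-t)^(y+1) = (1-t)^y*(1-t) := by rw [Real.rpow_add h1t, Real.rpow_one]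
        have eb : (1-t)^(y+2) = (1-t)^y*(1-t)^2 := by rw [Real.rpow_add h1t, Real.rpow_two]
        rw [ea, eb]; ring
    rw [e, intervalIntegral.integral_comp_sub_left (fun s : ℝ => s^(y+1) - s^(y+2)) 1,
      show (1:ℝ)-1 = 0 by norm_num, show (1:ℝ)-0 = 1 by norm_num, Ipow y hy0]
  have I5 : (∫ t in (0:ℝ)..1, t^2*(1-t)^2) = 1/30 := by
    have e : (∫ t in (0:ℝ)..1, t^2*(1-t)^2) = ∫ t in (0:ℝ)..1, (t^2 - 2*t^3 + t^4) := by
      apply intervalIntegral.integral_congr; intro t _; ring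
    rw [e]
    rw [integral_add ((intervalIntegrable_pow 2).sub ((intervalIntegrable_pow 3).const_mul 2))
      (intervalIntegrable_pow 4),
      integral_sub (intervalIntegrable_pow 2) ((intervalIntegrable_pow 3).const_mul 2),
      intervalIntegral.integral_const_mul, integral_pow, integral_pow, integral_pow]
    norm_num
  have hgval : (∫ t in (0:ℝ)..1, (t^(x-1) + (1-t)^(y-1) - 1 + c1*(t^(x+1)*(1-t))
      + c2*(t*(1-t)^(y+1)) + c3*(t^2*(1-t)^2)))
      = 1/x + 1/y - 1 + c1*(1/((x+2)*(x+3))) + c2*(1/((y+2)*(y+3))) + c3*(1/30) := by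
    rw [integral_add ((((J1.add J2).sub Jc).add (J3.const_mul c1)).add (J4.const_mul c2))
        (J5.const_mul c3),
      integral_add (((J1.add J2).sub Jc).add (J3.const_mul c1)) (J4.const_mul c2),
      integral_add ((J1.add J2).sub Jc) (J3.const_mul c1),
      integral_sub (J1.add J2) Jc,
      integral_add J1 J2,
      intervalIntegral.integral_const_mul, intervalIntegral.integral_const_mul,
      intervalIntegral.integral_const_mul,
      I1, I2, I3, I4, I5]
    norm_num
  -- value of ∫ f
  have hGxy : (0:ℝ) < Real.Gamma (x+y) := Real.Gamma_pos_of_pos (by linarith)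
  have hB2 : (∫ t in (0:ℝ)..1, t^x*(1-t)^y)
      = x*y/((x+y)*(x+y+1)) * (Real.Gamma x * Real.Gamma y / Real.Gamma (x+y)) := by
    have h := realBeta (by linarith : (0:ℝ) < x+1) (by linarith : (0:ℝ) < y+1)
    simp only [add_sub_cancel_right] at h
    rw [← h]
    rw [Real.Gamma_add_one hx0.ne', Real.Gamma_add_one hy0.ne',
      show x+1+(y+1) = (x+y+1)+1 by ring, Real.Gamma_add_one (by linarith : x+y+1 ≠ 0),
      show x+y+1 = (x+y)+1 by ring, Real.Gamma_add_one (by linarith : x+y ≠ 0)]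
    field_simp
  have hfval : (∫ t in (0:ℝ)..1, (t^(x-1)*(1-t)^(y-1) - (1-x)*(1-y)*(t^x*(1-t)^y)))
      = (Real.Gamma x * Real.Gamma y / Real.Gamma (x+y))
        - (1-x)*(1-y)*(x*y/((x+y)*(x+y+1)) * (Real.Gamma x * Real.Gamma y / Real.Gamma (x+y))) := by
    rw [integral_sub JB1 (JB2.const_mul ((1-x)*(1-y))),
      intervalIntegral.integral_const_mul, hB2, ← realBeta hx0 hy0]
  rw [hgval, hfval] at hmono
  -- final algebra
  set B : ℝ := Real.Gamma x * Real.Gamma y / Real.Gamma (x+y) with hBdef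
  set k : ℝ := (1-x)*(1-y)*(x*y/((x+y)*(x+y+1))) with hk
  have hkey : 1/x + 1/y - 1 + c1*(1/((x+2)*(x+3))) + c2*(1/((y+2)*(y+3))) + c3*(1/30)
      ≤ B*(1-k) := by
    have : B - (1-x)*(1-y)*(x*y/((x+y)*(x+y+1)) * B) = B*(1-k) := by rw [hk]; ring
    linarith [hmono, this]
  have hs0 : (0:ℝ) < x + y := by linarith
  have hs1 : (0:ℝ) < x + y + 1 := by linarith
  have hkpos : 0 < 1 - k := by
    rw [hk, div_eq_mul_inv]
    have hD : (0:ℝ) < ((x+y)*(x+y+1))⁻¹ := by positivity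
    have h1 : (1-x)*(1-y)*(x*y*((x+y)*(x+y+1))⁻¹) < 1 := by
      have h2 : x*y < (x+y)*(x+y+1) := by nlinarith
      have h3 : x*y*((x+y)*(x+y+1))⁻¹ < 1 := by
        rw [← div_eq_mul_inv, div_lt_one (by positivity)]; exact h2
      nlinarith [mul_pos hx0 hy0, mul_pos (mul_pos hx0 hy0) hD, mul_pos hx1' hy1']
    linarith
  -- weaken E
  have hE1 : (1-x)*(1-y)*y/24 ≤ c1*(1/((x+2)*(x+3))) := by
    have hd : (0:ℝ) < (x+2)*(x+3) := by nlinarith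
    have hle : (x+2)*(x+3) ≤ 12 := by nlinarith
    have hc1n : 0 ≤ c1 := by
      rw [hc1]; apply div_nonneg _ (by norm_num)
      exact mul_nonneg (mul_nonneg hx1'.le hy0.le) hy1'.le
    have := div_le_div_of_nonneg_left hc1n hd hle
    calc (1-x)*(1-y)*y/24 = c1/12 := by rw [hc1]; ring
    _ ≤ c1/((x+2)*(x+3)) := by
        apply div_le_div_of_nonneg_left hc1n hd hle
    _ = c1*(1/((x+2)*(x+3))) := by ring
  have hE2 : (1-x)*(1-y)*x/24 ≤ c2*(1/((y+2)*(y+3))) := by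
    have hd : (0:ℝ) < (y+2)*(y+3) := by nlinarith
    have hle : (y+2)*(y+3) ≤ 12 := by nlinarith
    have hc2n : 0 ≤ c2 := by
      rw [hc2]; apply div_nonneg _ (by norm_num)
      exact mul_nonneg (mul_nonneg hx0.le hx1'.le) hy1'.le
    calc (1-x)*(1-y)*x/24 = c2/12 := by rw [hc2]; ring
    _ ≤ c2/((y+2)*(y+3)) := by
        apply div_le_div_of_nonneg_left hc2n hd hle
    _ = c2*(1/((y+2)*(y+3))) := by ring
  have hE3 : (0:ℝ) ≤ c3*(1/30) := by
    rw [hc3]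
    have : 0 ≤ x*(1-x)*y*(1-y) := by positivity
    positivity
  have hkeyW : 1/x + 1/y - 1 + (1-x)*(1-y)*(x+y)/24 ≤ B*(1-k) := by
    have : (1-x)*(1-y)*(x+y)/24 = (1-x)*(1-y)*y/24 + (1-x)*(1-y)*x/24 := by ring
    linarith [hkey, hE1, hE2, hE3]
  -- identity: V_weak - T*(1-k) = H/(x+y+1)^2
  have hH := polyH hx0 hx1 hy0 hy1
  have hT : ((x+y)/(x*y))*(1 - 2*x*y/(x+y+1))*(1-k)
      < 1/x + 1/y - 1 + (1-x)*(1-y)*(x+y)/24 := by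
    have hid : (1/x + 1/y - 1 + (1-x)*(1-y)*(x+y)/24)
        - ((x+y)/(x*y))*(1 - 2*x*y/(x+y+1))*(1-k)
        = ((1-x)*(1-y)*(x+y)*(x+y+1)^2/24 + x*y*(3*(x+y)-1-2*(x*y)))/(x+y+1)^2 := by
      rw [hk]
      field_simp
      ring
    have hpos : 0 < ((1-x)*(1-y)*(x+y)*(x+y+1)^2/24 + x*y*(3*(x+y)-1-2*(x*y)))/(x+y+1)^2 := by
      apply div_pos hH (by positivity)
    linarith [hid, hpos]
  have : ((x+y)/(x*y))*(1 - 2*x*y/(x+y+1))*(1-k) < B*(1-k) := lt_of_lt_of_le hT hkeyW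
  exact (mul_lt_mul_iff_of_pos_right hkpos).1 this
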